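/- For every integer a ≥ 3 and every integer ν, ρ(ν; 2^a) = 2^{a+1} if ν ≡ 2 (mod 8) and ρ(ν; 2^a) = 0 otherwise. -/

import Mathlib

/-- ρ(ν;q) := #{(u,v) ∈ (ℤ/qℤ)² : uv is a unit and u²+v² ≡ ν (mod q)}. -/
noncomputable def rho (ν : ℤ) (q : ℕ) : ℕ :=
  Nat.card {uv : ZMod q × ZMod q // IsUnit (uv.1 * uv.2) ∧ uv.1 ^ 2 + uv.2 ^ 2 = (ν : ZMod q)}

noncomputable def rhoZ {q : ℕ} (c : ZMod q) : ℕ :=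
  Nat.card {uv : ZMod q × ZMod q // IsUnit (uv.1 * uv.2) ∧ uv.1 ^ 2 + uv.2 ^ 2 = c}

lemma rho_eq_rhoZ (ν : ℤ) (q : ℕ) : rho ν q = rhoZ ((ν : ZMod q)) := rfl

lemma two_dvd_pow {k : ℕ} (hk : 1 ≤ k) : (2:ℕ) ∣ 2^k := dvd_pow_self 2 (by omega)

lemma isUnit_iff_cast {k : ℕ} (hk : 1 ≤ k) (x : ZMod (2^k)) :
    IsUnit x ↔ ZMod.castHom (two_dvd_pow hk) (ZMod 2) x = 1 := by
  haveI : NeZero (2^k) := ⟨by positivity⟩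
  have hx : ((x.val : ℕ) : ZMod (2^k)) = x := ZMod.natCast_rightInverse x
  have hcast : ZMod.castHom (two_dvd_pow hk) (ZMod 2) x = ((x.val : ℕ) : ZMod 2) := by
    rw [ZMod.castHom_apply, ← ZMod.natCast_val]
  rw [hcast]
  constructor
  · intro h
    rw [← hx, ZMod.isUnit_iff_coprime, Nat.coprime_pow_right_iff (by omega),
      Nat.coprime_two_right, Nat.odd_iff] at h
    rw [← ZMod.natCast_mod, h]; rfl
  · intro h
    rw [← hx, ZMod.isUnit_iff_coprime, Nat.coprime_pow_right_iff (by omega),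
      Nat.coprime_two_right, Nat.odd_iff]
    rw [← ZMod.natCast_mod] at h
    have : x.val % 2 = 0 ∨ x.val % 2 = 1 := by omega
    rcases this with h0 | h1
    · rw [h0] at h; exact absurd h (by decide)
    · exact h1

lemma isUnit_iff_val {k : ℕ} (hk : 1 ≤ k) (x : ZMod (2^k)) :
    IsUnit x ↔ x.val % 2 = 1 := by
  haveI : NeZero (2^k) := ⟨by positivity⟩
  have hx : ((x.val : ℕ) : ZMod (2^k)) = x := ZMod.natCast_rightInverse x
  rw [← hx, ZMod.isUnit_iff_coprime, Nat.coprime_pow_right_iff (by omega),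
    Nat.coprime_two_right, Nat.odd_iff, hx]

lemma two_pow_zero {k m : ℕ} (hm : k ≤ m) : (2 : ZMod (2^k))^m = 0 := by
  have h1 : (2 : ZMod (2^k))^k = 0 := by
    have : ((2^k : ℕ) : ZMod (2^k)) = 0 := ZMod.natCast_self _
    rwa [Nat.cast_pow, Nat.cast_ofNat] at this
  calc (2 : ZMod (2^k))^m = 2^k * 2^(m-k) := by rw [← pow_add]; congr 1; omega
  _ = 0 := by rw [h1, zero_mul]

lemma mul_odd {k : ℕ} (hk : 1 ≤ k) {u : ZMod (2^k)} (hu : IsUnit u) :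
    (2 : ZMod (2^k))^(k-1) * u = 2^(k-1) := by
  haveI : NeZero (2^k) := ⟨by positivity⟩
  have hx : ((u.val : ℕ) : ZMod (2^k)) = u := ZMod.natCast_rightInverse u
  have hodd : u.val = 2*(u.val/2)+1 := by
    have := (isUnit_iff_val hk u).mp hu; omega
  have hp : (2:ZMod (2^k))^(k-1) * 2 = 2^k := by
    rw [← pow_succ]; congr 1; omega
  calc (2 : ZMod (2^k))^(k-1) * u = 2^(k-1) * ((2*(u.val/2)+1 : ℕ) : ZMod (2^k)) := by
        rw [← hodd, hx]
  _ = 2^(k-1) * 2 * (u.val/2 : ℕ) + 2^(k-1) := by push_cast; ring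
  _ = 2^k * (u.val/2 : ℕ) + 2^(k-1) := by rw [hp]
  _ = 2^(k-1) := by rw [two_pow_zero (le_refl k), zero_mul, zero_add]

lemma sq_shift {k : ℕ} (hk : 4 ≤ k) {u : ZMod (2^k)} (hu : IsUnit u) :
    (u + 2^(k-2))^2 = u^2 + 2^(k-1) := by
  have h1 : (2:ZMod (2^k)) * 2^(k-2) = 2^(k-1) := by
    rw [← pow_succ']; congr 1; omega
  have h2 : (2:ZMod (2^k))^(k-2) * 2^(k-2) = 0 := by
    rw [← pow_add]; exact two_pow_zero (by omega)
  calc (u + 2^(k-2))^2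
      = u^2 + (2 * 2^(k-2)) * u + 2^(k-2) * 2^(k-2) := by ring
    _ = u^2 + 2^(k-1) * u + 0 := by rw [h1, h2]
    _ = u^2 + 2^(k-1) := by rw [mul_odd (by omega) hu]; ring

lemma isUnit_shift {k m : ℕ} (hk : 1 ≤ k) (hm : 1 ≤ m) (u : ZMod (2^k)) :
    IsUnit (u + 2^m) ↔ IsUnit u := by
  rw [isUnit_iff_cast hk, isUnit_iff_cast hk, map_add, map_pow]
  have h2 : ZMod.castHom (two_dvd_pow hk) (ZMod 2) 2 = 0 := by
    rw [map_ofNat]; decide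
  rw [h2, zero_pow (by omega), add_zero]

lemma isUnit_shift' {k m : ℕ} (hk : 1 ≤ k) (hm : 1 ≤ m) (u : ZMod (2^k)) :
    IsUnit (u - 2^m) ↔ IsUnit u := by
  rw [← isUnit_shift hk hm (u - 2^m), sub_add_cancel]

lemma neg_two_pow {k : ℕ} (hk : 1 ≤ k) : -((2:ZMod (2^k))^(k-1)) = 2^(k-1) := by
  rw [neg_eq_iff_add_eq_zero, ← two_mul, ← pow_succ']
  exact two_pow_zero (by omega)

lemma sq_shift_sub {k : ℕ} (hk : 4 ≤ k) {u : ZMod (2^k)} (hu : IsUnit u) :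
    (u - 2^(k-2))^2 = u^2 + 2^(k-1) := by
  have h1 : (2:ZMod (2^k)) * 2^(k-2) = 2^(k-1) := by
    rw [← pow_succ']; congr 1; omega
  have h2 : (2:ZMod (2^k))^(k-2) * 2^(k-2) = 0 := by
    rw [← pow_add]; exact two_pow_zero (by omega)
  calc (u - 2^(k-2))^2
      = u^2 - (2 * 2^(k-2)) * u + 2^(k-2) * 2^(k-2) := by ring
    _ = u^2 - 2^(k-1) * u + 0 := by rw [h1, h2]
    _ = u^2 + 2^(k-1) := by
        rw [mul_odd (by omega) hu, add_zero, sub_eq_add_neg, neg_two_pow (by omega)]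

lemma rhoZ_shift {k : ℕ} (hk : 4 ≤ k) (c : ZMod (2^k)) :
    rhoZ c = rhoZ (c + 2^(k-1)) := by
  have h2 : ((2:ZMod (2^k))^(k-1)) + 2^(k-1) = 0 := by
    rw [← two_mul, ← pow_succ']; exact two_pow_zero (by omega)
  apply Nat.card_congr
  refine ⟨fun x => ⟨(x.1.1 + 2^(k-2), x.1.2), ?_, ?_⟩,
          fun x => ⟨(x.1.1 - 2^(k-2), x.1.2), ?_, ?_⟩, ?_, ?_⟩
  · rw [IsUnit.mul_iff]
    have := IsUnit.mul_iff.mp x.2.1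
    exact ⟨(isUnit_shift (by omega) (by omega) _).mpr this.1, this.2⟩
  · have hu := (IsUnit.mul_iff.mp x.2.1).1
    rw [sq_shift hk hu, add_right_comm, x.2.2]
  · rw [IsUnit.mul_iff]
    have := IsUnit.mul_iff.mp x.2.1
    exact ⟨(isUnit_shift' (by omega) (by omega) _).mpr this.1, this.2⟩
  · have hu := (IsUnit.mul_iff.mp x.2.1).1
    rw [sq_shift_sub hk hu, add_right_comm, x.2.2, add_assoc, h2, add_zero]
  · intro x; ext <;> simp
  · intro x; ext <;> simp

lemma pi_two_pow {a : ℕ} :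
    ZMod.castHom (pow_dvd_pow 2 (Nat.le_succ a)) (ZMod (2^a)) (2^a) = 0 := by
  rw [map_pow, map_ofNat]
  exact two_pow_zero (le_refl a)

lemma ker_pi {a : ℕ} (x : ZMod (2^(a+1)))
    (hx : ZMod.castHom (pow_dvd_pow 2 (Nat.le_succ a)) (ZMod (2^a)) x = 0) :
    x = 0 ∨ x = 2^a := by
  haveI : NeZero (2^(a+1)) := ⟨by positivity⟩
  have hxv : ((x.val : ℕ) : ZMod (2^(a+1))) = x := ZMod.natCast_rightInverse x
  have h1 : ZMod.castHom (pow_dvd_pow 2 (Nat.le_succ a)) (ZMod (2^a)) x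
      = ((x.val : ℕ) : ZMod (2^a)) := by
    rw [ZMod.castHom_apply, ← ZMod.natCast_val]
  rw [h1, ZMod.natCast_eq_zero_iff] at hx
  have hlt : x.val < 2^(a+1) := ZMod.val_lt x
  obtain ⟨m, hm⟩ := hx
  have h2a : 0 < (2:ℕ)^a := Nat.pow_pos (by norm_num)
  have hpow : (2:ℕ)^(a+1) = 2^a * 2 := by rw [pow_succ]
  have hm2 : m < 2 := by
    by_contra hc
    push_neg at hc
    have : 2^a * 2 ≤ 2^a * m := Nat.mul_le_mul_left _ hc
    omega
  interval_cases m
  · left; rw [← hxv]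
    have : x.val = 0 := by omega
    rw [this]; simp
  · right; rw [← hxv]
    have : x.val = 2^a := by omega
    rw [this]; push_cast; ring

lemma pi_eq_iff {a : ℕ} (ν : ℤ) (s : ZMod (2^(a+1))) :
    ZMod.castHom (pow_dvd_pow 2 (Nat.le_succ a)) (ZMod (2^a)) s = ((ν : ℤ) : ZMod (2^a)) ↔
      s = ((ν : ℤ) : ZMod (2^(a+1))) ∨ s = ((ν : ℤ) : ZMod (2^(a+1))) + 2^a := by
  constructor
  · intro h
    have h0 : ZMod.castHom (pow_dvd_pow 2 (Nat.le_succ a)) (ZMod (2^a))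
        (s - ((ν : ℤ) : ZMod (2^(a+1)))) = 0 := by
      rw [map_sub, map_intCast, h, sub_self]
    rcases ker_pi _ h0 with h1 | h1
    · left; linear_combination h1
    · right; linear_combination h1
  · rintro (h | h)
    · rw [h, map_intCast]
    · rw [h, map_add, map_intCast, pi_two_pow, add_zero]

lemma isUnit_lift {a : ℕ} (ha : 1 ≤ a) (u0 : ZMod (2^a)) (s : ℕ) :
    IsUnit (((u0.val + s*2^a : ℕ) : ZMod (2^(a+1)))) ↔ IsUnit u0 := by
  rw [isUnit_iff_val (by omega : 1 ≤ a+1), isUnit_iff_val ha, ZMod.val_natCast]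
  rw [Nat.mod_mod_of_dvd _ (two_dvd_pow (by omega : 1 ≤ a+1))]
  have hd : 2 ∣ s * 2^a := Dvd.dvd.mul_left (two_dvd_pow ha) s
  omega

lemma sq_lift {a : ℕ} (ha : 1 ≤ a) (x c : ZMod (2^(a+1))) :
    (x + c * 2^a)^2 = x^2 := by
  have h1 : (2:ZMod (2^(a+1)))*2^a = 0 := by
    rw [← pow_succ']; exact two_pow_zero (le_refl _)
  have h2 : (2:ZMod (2^(a+1)))^a * 2^a = 0 := by
    rw [← pow_add]; exact two_pow_zero (by omega)
  calc (x + c*2^a)^2 = x^2 + (2*2^a)*(c*x) + (c*c)*(2^a*2^a) := by ring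
  _ = x^2 := by rw [h1, h2]; ring

lemma rho_zero (a : ℕ) (ha : 3 ≤ a) (ν : ℤ) (hν : ν % 8 ≠ 2) : rho ν (2^a) = 0 := by
  rw [rho, Nat.card_eq_zero]
  left
  constructor
  rintro ⟨⟨u, v⟩, hu, hs⟩
  have hdvd : (2:ℕ)^3 ∣ 2^a := pow_dvd_pow 2 ha
  let f := ZMod.castHom hdvd (ZMod (2^3))
  have h1 : IsUnit (f u * f v) := by rw [← map_mul]; exact hu.map f
  have h2 : f u ^ 2 + f v ^ 2 = ((ν : ℤ) : ZMod (2^3)) := by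
    rw [← map_pow, ← map_pow, ← map_add, hs, map_intCast]
  have key : ∀ x y : ZMod (2^3), IsUnit (x*y) → x^2+y^2 = 2 := by decide
  have := key _ _ h1
  rw [h2] at this
  have h3 : ν ≡ 2 [ZMOD (2^3)] := (ZMod.intCast_eq_intCast_iff _ _ _).mp (by exact_mod_cast this)
  simp only [Int.ModEq] at h3
  norm_num at h3
  omega
lemma rho_base (ν : ℤ) (hν : ν % 8 = 2) : rho ν (2^3) = 2^4 := by
  have h2 : ((ν : ℤ) : ZMod (2^3)) = 2 := by
    have : ν ≡ 2 [ZMOD (2^3)] := by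
      simp only [Int.ModEq]; norm_num; omega
    exact_mod_cast (ZMod.intCast_eq_intCast_iff _ _ _).mpr this
  rw [rho, h2, Nat.card_eq_fintype_card]
  decide

lemma card_T {a : ℕ} (ha : 1 ≤ a) (ν : ℤ) :
    Nat.card {uv : ZMod (2^(a+1)) × ZMod (2^(a+1)) //
      IsUnit (uv.1 * uv.2) ∧
      ZMod.castHom (pow_dvd_pow 2 (Nat.le_succ a)) (ZMod (2^a)) (uv.1^2 + uv.2^2)
        = ((ν : ℤ) : ZMod (2^a))} = 4 * rho ν (2^a) := by
  haveI : NeZero ((2:ℕ)^a) := ⟨by positivity⟩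
  haveI : NeZero ((2:ℕ)^(a+1)) := ⟨by positivity⟩
  have h2a : 0 < (2:ℕ)^a := Nat.pow_pos (by norm_num)
  have hpow : (2:ℕ)^(a+1) = 2^a * 2 := by rw [pow_succ]
  have hπnat : ∀ n : ℕ, ZMod.castHom (pow_dvd_pow 2 (Nat.le_succ a)) (ZMod (2^a))
      ((n : ZMod (2^(a+1)))) = (n : ZMod (2^a)) := fun n => map_natCast _ n
  have hπval : ∀ x : ZMod (2^(a+1)), ZMod.castHom (pow_dvd_pow 2 (Nat.le_succ a))
      (ZMod (2^a)) x = ((x.val : ℕ) : ZMod (2^a)) := by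
    intro x
    rw [ZMod.castHom_apply, ← ZMod.natCast_val]
  have hS0 : ((2:ZMod (2^a)))^a = 0 := two_pow_zero (le_refl a)
  have keyL : ∀ (w : ZMod (2^a)) (c : Fin 2),
      (ZMod.castHom (pow_dvd_pow 2 (Nat.le_succ a)) (ZMod (2^a))
        (((w.val + c.val * 2^a : ℕ) : ZMod (2^(a+1)))) = w) ∧
      ((((w.val + c.val * 2^a : ℕ) : ZMod (2^(a+1)))).val / 2^a % 2 = c.val) := by
    intro w c
    have hwlt : w.val < 2^a := ZMod.val_lt w
    have hclt : c.val < 2 := c.2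
    constructor
    · rw [hπnat]
      push_cast
      rw [hS0, mul_zero, add_zero, ZMod.natCast_rightInverse w]
    · have hcle : c.val * 2^a ≤ 2^a := by
        have h1 : c.val ≤ 1 := by omega
        calc c.val * 2^a ≤ 1 * 2^a := Nat.mul_le_mul_right _ h1
        _ = 2^a := one_mul _
      have hlt : w.val + c.val * 2^a < 2^(a+1) := by omega
      rw [ZMod.val_natCast, Nat.mod_eq_of_lt hlt,
        Nat.add_mul_div_right _ _ h2a, Nat.div_eq_of_lt hwlt, zero_add,
        Nat.mod_eq_of_lt hclt]
  have keyR : ∀ w : ZMod (2^(a+1)),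
      ((((ZMod.castHom (pow_dvd_pow 2 (Nat.le_succ a)) (ZMod (2^a)) w).val
        + w.val / 2^a % 2 * 2^a : ℕ)) : ZMod (2^(a+1))) = w := by
    intro w
    have hwlt : w.val < 2^(a+1) := ZMod.val_lt w
    have hq : w.val / 2^a < 2 := Nat.div_lt_of_lt_mul (by omega)
    have hval : (ZMod.castHom (pow_dvd_pow 2 (Nat.le_succ a)) (ZMod (2^a)) w).val
        = w.val % 2^a := by
      rw [hπval, ZMod.val_natCast]
    rw [hval, Nat.mod_eq_of_lt hq, Nat.mod_add_div' w.val (2^a)]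
    exact ZMod.natCast_rightInverse w
  have e : {uv : ZMod (2^(a+1)) × ZMod (2^(a+1)) //
      IsUnit (uv.1 * uv.2) ∧
      ZMod.castHom (pow_dvd_pow 2 (Nat.le_succ a)) (ZMod (2^a)) (uv.1^2 + uv.2^2)
        = ((ν : ℤ) : ZMod (2^a))} ≃
      (Fin 2 × Fin 2) × {uv : ZMod (2^a) × ZMod (2^a) //
        IsUnit (uv.1 * uv.2) ∧ uv.1^2 + uv.2^2 = ((ν : ℤ) : ZMod (2^a))} := by
    refine ⟨fun y => ⟨(⟨y.1.1.val/2^a % 2, Nat.mod_lt _ (by norm_num)⟩,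
                      ⟨y.1.2.val/2^a % 2, Nat.mod_lt _ (by norm_num)⟩),
          ⟨(ZMod.castHom (pow_dvd_pow 2 (Nat.le_succ a)) (ZMod (2^a)) y.1.1,
            ZMod.castHom (pow_dvd_pow 2 (Nat.le_succ a)) (ZMod (2^a)) y.1.2), ?_, ?_⟩⟩,
        fun x => ⟨(((x.2.1.1.val + x.1.1.val * 2^a : ℕ) : ZMod (2^(a+1))),
                   ((x.2.1.2.val + x.1.2.val * 2^a : ℕ) : ZMod (2^(a+1)))), ?_, ?_⟩,
        ?_, ?_⟩
    · rw [← map_mul]; exact y.2.1.map _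
    · rw [← map_pow, ← map_pow, ← map_add]; exact y.2.2
    · rw [IsUnit.mul_iff, isUnit_lift ha, isUnit_lift ha, ← IsUnit.mul_iff]
      exact x.2.2.1
    · have hu : ((x.2.1.1.val + x.1.1.val * 2^a : ℕ) : ZMod (2^(a+1)))
          = ((x.2.1.1.val : ℕ) : ZMod (2^(a+1)))
            + ((x.1.1.val : ℕ) : ZMod (2^(a+1))) * 2^a := by push_cast; ring
      have hv : ((x.2.1.2.val + x.1.2.val * 2^a : ℕ) : ZMod (2^(a+1)))
          = ((x.2.1.2.val : ℕ) : ZMod (2^(a+1)))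
            + ((x.1.2.val : ℕ) : ZMod (2^(a+1))) * 2^a := by push_cast; ring
      rw [hu, hv, sq_lift ha, sq_lift ha, map_add, map_pow, map_pow, hπnat, hπnat,
        ZMod.natCast_rightInverse x.2.1.1, ZMod.natCast_rightInverse x.2.1.2]
      exact x.2.2.2
    · intro y
      obtain ⟨⟨u, v⟩, hz⟩ := y
      apply Subtype.ext
      exact Prod.ext (keyR u) (keyR v)
    · intro x
      obtain ⟨⟨s, t⟩, z⟩ := x
      obtain ⟨⟨u0, v0⟩, hz⟩ := z
      apply Prod.ext
      · apply Prod.ext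
        · exact Fin.ext (keyL u0 s).2
        · exact Fin.ext (keyL v0 t).2
      · apply Subtype.ext
        exact Prod.ext (keyL u0 s).1 (keyL v0 t).1
  rw [Nat.card_congr e, Nat.card_prod, rho]
  norm_num

lemma card_split {a : ℕ} (ν : ℤ) :
    Nat.card {uv : ZMod (2^(a+1)) × ZMod (2^(a+1)) //
      IsUnit (uv.1 * uv.2) ∧
      ZMod.castHom (pow_dvd_pow 2 (Nat.le_succ a)) (ZMod (2^a)) (uv.1^2 + uv.2^2)
        = ((ν : ℤ) : ZMod (2^a))}
    = rhoZ ((ν : ℤ) : ZMod (2^(a+1))) + rhoZ (((ν : ℤ) : ZMod (2^(a+1))) + 2^a) := by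
  classical
  haveI : NeZero ((2:ℕ)^(a+1)) := ⟨by positivity⟩
  have hne : ((ν : ℤ) : ZMod (2^(a+1))) ≠ ((ν : ℤ) : ZMod (2^(a+1))) + 2^a := by
    intro h
    have h0 : ((2:ZMod (2^(a+1))))^a = 0 := add_eq_left.mp h.symm
    have h1 : (((2^a : ℕ)) : ZMod (2^(a+1))) = 0 := by push_cast; exact h0
    rw [ZMod.natCast_eq_zero_iff] at h1
    have h2 : (2:ℕ)^(a+1) ≤ 2^a := Nat.le_of_dvd (by positivity) h1
    have h3 : (2:ℕ)^a < 2^(a+1) := Nat.pow_lt_pow_right (by norm_num) (Nat.lt_succ_self a)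
    omega
  set p : ZMod (2^(a+1)) × ZMod (2^(a+1)) → Prop := fun uv =>
    IsUnit (uv.1 * uv.2) ∧ uv.1^2 + uv.2^2 = ((ν : ℤ) : ZMod (2^(a+1))) with hp
  set q : ZMod (2^(a+1)) × ZMod (2^(a+1)) → Prop := fun uv =>
    IsUnit (uv.1 * uv.2) ∧ uv.1^2 + uv.2^2 = ((ν : ℤ) : ZMod (2^(a+1))) + 2^a with hq
  have hiff : ∀ uv : ZMod (2^(a+1)) × ZMod (2^(a+1)),
      (IsUnit (uv.1 * uv.2) ∧
        ZMod.castHom (pow_dvd_pow 2 (Nat.le_succ a)) (ZMod (2^a)) (uv.1^2 + uv.2^2)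
          = ((ν : ℤ) : ZMod (2^a))) ↔ (p uv ∨ q uv) := by
    intro uv
    rw [hp, hq]
    simp only []
    rw [pi_eq_iff]
    tauto
  have hdisj : Disjoint p q := by
    refine disjoint_iff_inf_le.mpr ?_
    intro uv hx
    exact absurd (hx.1.2.symm.trans hx.2.2) hne
  calc Nat.card {uv : ZMod (2^(a+1)) × ZMod (2^(a+1)) //
      IsUnit (uv.1 * uv.2) ∧
      ZMod.castHom (pow_dvd_pow 2 (Nat.le_succ a)) (ZMod (2^a)) (uv.1^2 + uv.2^2)
        = ((ν : ℤ) : ZMod (2^a))}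
      = Nat.card {uv // p uv ∨ q uv} := Nat.card_congr (Equiv.subtypeEquivRight hiff)
    _ = Nat.card ({uv // p uv} ⊕ {uv // q uv}) := Nat.card_congr (subtypeOrEquiv p q hdisj)
    _ = Nat.card {uv // p uv} + Nat.card {uv // q uv} := Nat.card_sum
    _ = _ := rfl

lemma rho_step {a : ℕ} (ha : 3 ≤ a) (ν : ℤ) :
    rho ν (2^(a+1)) = 2 * rho ν (2^a) := by
  have h1 := card_T (by omega : 1 ≤ a) ν
  have h2 := card_split (a := a) ν
  have h3 := rhoZ_shift (k := a+1) (by omega) ((ν : ℤ) : ZMod (2^(a+1)))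
  rw [Nat.add_sub_cancel] at h3
  rw [rho_eq_rhoZ]
  omega

lemma rho_pos (a : ℕ) (ha : 3 ≤ a) (ν : ℤ) (hν : ν % 8 = 2) :
    rho ν (2^a) = 2^(a+1) := by
  induction a, ha using Nat.le_induction with
  | base => exact rho_base ν hν
  | succ n hn ih => rw [rho_step hn ν, ih]; ring

theorem stmt4 (a : ℕ) (ha : 3 ≤ a) (ν : ℤ) :
    rho ν (2 ^ a) = (if ν % 8 = 2 then 2 ^ (a + 1) else 0) := by
  split_ifs with h
  · exact rho_pos a ha ν h
  · exact rho_zero a ha ν h
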